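/- Let H be a complex Hilbert space with inner product ⟨·,·⟩ linear in the first and conjugate-linear in the second argument, let C : H → H be a bounded linear operator, σ > 0, and u ∈ H with ⟨C u, u⟩ ≠ 0. Suppose that for each p < 0 we are given: a complex number λ(p) with Re λ(p) < 0, a bounded linear operator A_p : H → H with A_p u = λ(p)·u and (A_p)* u = conj(λ(p))·u, and a bounded linear operator V_p : H → H satisfying the Lyapunov equation for (A_p, C, σ). Assume Re λ(p) → 0 as p → 0⁻. Then for every p < 0 one has Re λ(p)·⟨V_p u, u⟩ = −σ²·⟨C u, u⟩/2, and consequently |⟨V_p u, u⟩| → +∞ as p → 0⁻. -/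

import Mathlib

open ContinuousLinearMap Filter Topology

/-- The paper's inner product `⟨x, y⟩` (linear in the first argument,
conjugate-linear in the second) equals Mathlib's `inner y x`. -/
local notation "⟪" x ", " y "⟫" => @inner ℂ _ _ x y

/-- `V` satisfies the Lyapunov equation for `(A, C, σ)`. -/
def LyapunovEq {H : Type*} [NormedAddCommGroup H] [InnerProductSpace ℂ H]
    [CompleteSpace H] (A C : H →L[ℂ] H) (σ : ℝ) (V : H →L[ℂ] H) : Prop :=
  ∀ g h : H, ⟪h, A (V g)⟫ + ⟪h, V (adjoint A g)⟫ = -(σ ^ 2 : ℂ) * ⟪h, C g⟫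

theorem statement1 {H : Type*} [NormedAddCommGroup H] [InnerProductSpace ℂ H]
    [CompleteSpace H] (C : H →L[ℂ] H) (σ : ℝ) (hσ : 0 < σ) (u : H)
    (hC : ⟪u, C u⟫ ≠ 0)
    (lam : ℝ → ℂ) (A V : ℝ → H →L[ℂ] H)
    (hre : ∀ p < (0 : ℝ), (lam p).re < 0)
    (hA : ∀ p < (0 : ℝ), A p u = lam p • u)
    (hA' : ∀ p < (0 : ℝ), adjoint (A p) u = (starRingEnd ℂ) (lam p) • u)
    (hV : ∀ p < (0 : ℝ), LyapunovEq (A p) C σ (V p))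
    (hlim : Tendsto (fun p => (lam p).re) (𝓝[<] (0 : ℝ)) (𝓝 0)) :
    (∀ p < (0 : ℝ), ((lam p).re : ℂ) * ⟪u, V p u⟫ = -(σ ^ 2 : ℂ) * ⟪u, C u⟫ / 2) ∧
      Tendsto (fun p => ‖⟪u, V p u⟫‖) (𝓝[<] (0 : ℝ)) atTop := by
  have key : ∀ p < (0 : ℝ), ((lam p).re : ℂ) * ⟪u, V p u⟫ = -(σ ^ 2 : ℂ) * ⟪u, C u⟫ / 2 := by
    intro p hp
    have h := hV p hp u u
    have h1 : ⟪u, A p (V p u)⟫ = lam p * ⟪u, V p u⟫ := by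
      rw [← adjoint_inner_left, hA' p hp, inner_smul_left, Complex.conj_conj]
    have h2 : ⟪u, V p (adjoint (A p) u)⟫ = (starRingEnd ℂ) (lam p) * ⟪u, V p u⟫ := by
      rw [hA' p hp, map_smul, inner_smul_right]
    rw [h1, h2] at h
    have hc := Complex.add_conj (lam p)
    push_cast at hc
    linear_combination h / 2 - ⟪u, V p u⟫ / 2 * hc
  refine ⟨key, ?_⟩
  set c : ℂ := -(σ ^ 2 : ℂ) * ⟪u, C u⟫ / 2 with hc
  have hcne : c ≠ 0 := by
    apply div_ne_zero _ two_ne_zero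
    apply mul_ne_zero _ hC
    simp [hσ.ne']
  have habs : ∀ᶠ p in 𝓝[<] (0 : ℝ),
      ‖⟪u, V p u⟫‖ = ‖c‖ / |(lam p).re| := by
    filter_upwards [self_mem_nhdsWithin] with p hp
    have hre0 : ((lam p).re : ℂ) ≠ 0 := by
      exact_mod_cast (hre p hp).ne
    have : ⟪u, V p u⟫ = c / ((lam p).re : ℂ) := by
      field_simp
      linear_combination key p hp
    rw [this, norm_div, Complex.norm_real, Real.norm_eq_abs]
  have h1 : Tendsto (fun p => |(lam p).re|) (𝓝[<] (0 : ℝ)) (𝓝[>] (0 : ℝ)) := by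
    rw [tendsto_nhdsWithin_iff]
    constructor
    · simpa using hlim.abs
    · filter_upwards [self_mem_nhdsWithin] with p hp
      exact abs_pos.2 (hre p hp).ne
  have h2 : Tendsto (fun p => ‖c‖ / |(lam p).re|) (𝓝[<] (0 : ℝ)) atTop := by
    simp only [div_eq_mul_inv]
    exact (tendsto_inv_nhdsGT_zero.comp h1).const_mul_atTop
      (by simpa using norm_pos_iff.mpr hcne)
  exact Tendsto.congr' (habs.mono fun p hp => hp.symm) h2
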